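/- Let q₁,…,q_k ∈ ℝ^k and v₀ ∈ ℝ^k with ⟨v₀, q_j⟩ ≠ 0 for all j, set q̃_j = q_j/⟨v₀, q_j⟩, and for J ⊆ [k] with |J| = ℓ ≥ 1 let Δ_J = conv{q̃_j : j ∈ J}. Then ((ℓ−1)! · vol_{ℓ−1}(Δ_J))² = (∏_{j∈J}⟨v₀,q_j⟩)^{−2} · v_qᵀ · Ext_J(adj [Q]_J) · v_q, where Q = (⟨q_r, q_s⟩)_{r,s∈[k]} and v_q = (⟨v₀,q_1⟩,…,⟨v₀,q_k⟩)ᵀ. -/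

import Mathlib

open Matrix

/-- The principal submatrix of `A` on the index set `K`. -/
def restr {r : ℕ} (K : Finset (Fin r)) (A : Matrix (Fin r) (Fin r) ℝ) :
    Matrix K K ℝ :=
  A.submatrix Subtype.val Subtype.val

/-- The extension of a `K × K` matrix to an `r × r` matrix by zeros. -/
def extM {r : ℕ} (K : Finset (Fin r)) (B : Matrix K K ℝ) :
    Matrix (Fin r) (Fin r) ℝ :=
  fun i j => if hi : i ∈ K then if hj : j ∈ K then B ⟨i, hi⟩ ⟨j, hj⟩ else 0 else 0


variable {ι : Type*} [Fintype ι] [DecidableEq ι]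

def Pmat (j₀ : ι) : Matrix ι ι ℝ :=
  fun i j => (if j = j₀ then 1 else 0) - (if i = j₀ then 0 else if j = i then 1 else 0)

lemma Pmat_row_sum (j₀ i : ι) (f : ι → ℝ) :
    ∑ a, Pmat j₀ i a * f a = f j₀ - if i = j₀ then 0 else f i := by
  by_cases hi : i = j₀ <;>
    simp [Pmat, hi, sub_mul, ite_mul, Finset.sum_sub_distrib, Finset.sum_ite_eq']

lemma Pmat_mul_self (j₀ : ι) : Pmat j₀ * Pmat j₀ = 1 := by
  ext i j
  rw [Matrix.mul_apply, Pmat_row_sum]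
  by_cases hi : i = j₀ <;> by_cases hj : j = j₀ <;>
    simp [Pmat, hi, hj, one_apply, eq_comm, if_neg]
  · exact fun hc => hj (Eq.symm hc)
  · exact fun hc => hi (Eq.symm hc)

lemma Pmat_mulVec_one (j₀ : ι) : Pmat j₀ *ᵥ (1 : ι → ℝ) = Pi.single j₀ 1 := by
  ext i
  rw [show (Pmat j₀ *ᵥ (1 : ι → ℝ)) i = ∑ a, Pmat j₀ i a * (1 : ι → ℝ) a from rfl,
    Pmat_row_sum]
  by_cases hi : i = j₀ <;> simp [hi, Pi.single_apply]

lemma Pmat_conj_apply (j₀ : ι) (M : Matrix ι ι ℝ) {i j : ι} (hi : i ≠ j₀) (hj : j ≠ j₀) :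
    (Pmat j₀ * M * (Pmat j₀)ᵀ) i j = M j₀ j₀ - M i j₀ - M j₀ j + M i j := by
  rw [Matrix.mul_assoc, Matrix.mul_apply]
  have hMP : ∀ a, (M * (Pmat j₀)ᵀ) a j = M a j₀ - M a j := by
    intro a
    rw [Matrix.mul_apply]
    calc ∑ b, M a b * (Pmat j₀)ᵀ b j = ∑ b, Pmat j₀ j b * M a b := by
          simp [mul_comm, transpose_apply]
      _ = M a j₀ - M a j := by rw [Pmat_row_sum]; simp [hj]
  simp_rw [hMP]
  rw [show ∑ a, Pmat j₀ i a * (M a j₀ - M a j) =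
      (fun a => M a j₀ - M a j) j₀ - if i = j₀ then 0 else (fun a => M a j₀ - M a j) i from
    Pmat_row_sum j₀ i _]
  simp [hi]; ring

def eqv (j₀ : ι) : {i : ι // i ≠ j₀} ⊕ Unit ≃ ι where
  toFun x := Sum.elim Subtype.val (fun _ => j₀) x
  invFun i := if h : i = j₀ then Sum.inr () else Sum.inl ⟨i, h⟩
  left_inv x := by
    rcases x with ⟨i, hi⟩ | _
    · simp [hi]
    · simp
  right_inv i := by by_cases h : i = j₀ <;> simp [h]

lemma single_dot_mulVec_single (j₀ : ι) (A : Matrix ι ι ℝ) :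
    Pi.single j₀ (1 : ℝ) ⬝ᵥ (A *ᵥ Pi.single j₀ 1) = A j₀ j₀ := by
  simp [dotProduct, mulVec, Pi.single_apply, ite_mul, mul_ite,
    Finset.sum_ite_eq, Finset.sum_ite_eq']

lemma key_det (j₀ : ι) (M : Matrix ι ι ℝ)
    (G : Matrix {i : ι // i ≠ j₀} {i : ι // i ≠ j₀} ℝ)
    (hG : ∀ i j, G i j = M j₀ j₀ - M i.1 j₀ - M j₀ j.1 + M i.1 j.1) :
    G.det = (1 : ι → ℝ) ⬝ᵥ (M.adjugate *ᵥ (1 : ι → ℝ)) := by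
  set P := Pmat j₀ with hP
  set Gh := P * M * Pᵀ with hGh
  have hdet2 : P.det * P.det = 1 := by
    have := congrArg Matrix.det (Pmat_mul_self j₀)
    simpa [Matrix.det_mul] using this
  -- adjugate of Gh at (j₀, j₀) equals the full cofactor sum of M
  have hPe : P.adjugate *ᵥ Pi.single j₀ 1 = P.det • (1 : ι → ℝ) := by
    rw [← Pmat_mulVec_one j₀, ← hP, mulVec_mulVec, adjugate_mul, smul_mulVec,
      one_mulVec]
  have hadjGh : Gh.adjugate = (Pᵀ).adjugate * (M.adjugate * P.adjugate) := by
    rw [hGh, adjugate_mul_distrib, adjugate_mul_distrib]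
  have hstep : Gh.adjugate j₀ j₀ = (1 : ι → ℝ) ⬝ᵥ (M.adjugate *ᵥ (1 : ι → ℝ)) := by
    rw [show Gh.adjugate j₀ j₀ = Pi.single j₀ (1:ℝ) ⬝ᵥ (Gh.adjugate *ᵥ Pi.single j₀ 1) from
        (single_dot_mulVec_single j₀ _).symm,
      hadjGh, ← mulVec_mulVec, ← mulVec_mulVec, hPe, dotProduct_mulVec]
    have hleft : Pi.single j₀ (1 : ℝ) ᵥ* (Pᵀ).adjugate = P.det • (1 : ι → ℝ) := by
      rw [← adjugate_transpose, vecMul_transpose, hPe]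
    rw [hleft, mulVec_smul, smul_dotProduct, dotProduct_smul, smul_smul, hdet2,
      one_smul]
  rw [← hstep, adjugate_apply]
  set A := Gh.updateRow j₀ (Pi.single j₀ 1) with hA
  have hsub : A.submatrix (eqv j₀) (eqv j₀) =
      fromBlocks G (Matrix.of fun i _ => A i.1 j₀) 0 1 := by
    ext x y
    rcases x with i | _ <;> rcases y with j | _
    · show A i.1 j.1 = G i j
      rw [hA, updateRow_ne i.2, hGh, Pmat_conj_apply j₀ M i.2 j.2, hG]
    · rfl
    · show A j₀ j.1 = 0
      rw [hA, updateRow_self, Pi.single_eq_of_ne j.2]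
    · show A j₀ j₀ = 1
      rw [hA, updateRow_self, Pi.single_eq_same]
  rw [← det_submatrix_equiv_self (eqv j₀) A, hsub, det_fromBlocks_zero₂₁]
  simp

lemma dot_extM {r : ℕ} (K : Finset (Fin r)) (B : Matrix K K ℝ) (v : Fin r → ℝ) :
    v ⬝ᵥ (extM K B *ᵥ v) = (fun i : K => v i.1) ⬝ᵥ (B *ᵥ fun i : K => v i.1) := by
  simp only [dotProduct, mulVec]
  have inner : ∀ i : K, (∑ j, extM K B i.1 j * v j) = ∑ j : K, B i j * v j.1 := by
    intro i
    calc ∑ j, extM K B i.1 j * v j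
        = ∑ j ∈ K, extM K B i.1 j * v j := by
          refine (Finset.sum_subset (Finset.subset_univ K) ?_).symm
          intro x _ hx; simp [extM, hx]
      _ = ∑ j : K, extM K B i.1 j.1 * v j.1 :=
          (Finset.sum_coe_sort K (fun j => extM K B i.1 j * v j)).symm
      _ = ∑ j : K, B i j * v j.1 :=
          Finset.sum_congr rfl fun j _ => by simp [extM, i.2, j.2]
  calc ∑ i, v i * ∑ j, extM K B i j * v j
      = ∑ i ∈ K, v i * ∑ j, extM K B i j * v j := by
        refine (Finset.sum_subset (Finset.subset_univ K) ?_).symm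
        intro x _ hx; simp [extM, hx]
    _ = ∑ i : K, v i.1 * ∑ j, extM K B i.1 j * v j :=
        (Finset.sum_coe_sort K (fun i => v i * ∑ j, extM K B i j * v j)).symm
    _ = ∑ i : K, v i.1 * ∑ j : K, B i j * v j.1 :=
        Finset.sum_congr rfl fun i _ => by rw [inner i]

/-- Squared-volume formula for the simplex `Δ_J = conv{q̃_j : j ∈ J}`, where
`q̃_j = q_j / ⟨v₀, q_j⟩`: by Gram's determinant formula, `((ℓ-1)! vol_{ℓ-1}(Δ_J))²`
is the determinant of the Gram matrix `G` of the edge vectors `q̃_{j₁} − q̃_j`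
(`j ∈ J \ {j₁}`), and this equals
`(∏_{j∈J} ⟨v₀,q_j⟩)⁻² · v_qᵀ Ext_J(adj [Q]_J) v_q`. -/
theorem volume_Delta_J (k : ℕ) (q : Fin k → (Fin k → ℝ)) (v₀ : Fin k → ℝ)
    (h : ∀ j, v₀ ⬝ᵥ q j ≠ 0) (J : Finset (Fin k)) (j₁ : Fin k) (hj₁ : j₁ ∈ J)
    (qt : Fin k → (Fin k → ℝ)) (hqt : ∀ j, qt j = (v₀ ⬝ᵥ q j)⁻¹ • q j)
    (Q : Matrix (Fin k) (Fin k) ℝ) (hQ : ∀ r s, Q r s = q r ⬝ᵥ q s)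
    (vq : Fin k → ℝ) (hvq : ∀ j, vq j = v₀ ⬝ᵥ q j)
    (G : Matrix (J.erase j₁) (J.erase j₁) ℝ)
    (hG : ∀ i j, G i j = (qt j₁ - qt i.1) ⬝ᵥ (qt j₁ - qt j.1)) :
    G.det = ((∏ j ∈ J, v₀ ⬝ᵥ q j) ^ 2)⁻¹ *
      (vq ⬝ᵥ (extM J (restr J Q).adjugate *ᵥ vq)) := by
  classical
  set j₀ : {x // x ∈ J} := ⟨j₁, hj₁⟩ with hj₀
  set c : {x // x ∈ J} → ℝ := fun i => v₀ ⬝ᵥ q i.1 with hc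
  set M : Matrix {x // x ∈ J} {x // x ∈ J} ℝ :=
    Matrix.of (fun r s => qt r.1 ⬝ᵥ qt s.1) with hM
  have hq : ∀ j : Fin k, q j = (v₀ ⬝ᵥ q j) • qt j := by
    intro j; rw [hqt, smul_smul, mul_inv_cancel₀ (h j), one_smul]
  -- factorization of the restricted Gram matrix
  have hfact : restr J Q = diagonal c * M * diagonal c := by
    ext r s
    simp only [Matrix.mul_diagonal, Matrix.diagonal_mul, restr, submatrix_apply]
    rw [hQ]
    conv_lhs => rw [hq r.1, hq s.1]
    rw [smul_dotProduct, dotProduct_smul]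
    simp only [smul_eq_mul, hc, hM, Matrix.of_apply]
    ring
  have hadj : (restr J Q).adjugate =
      (diagonal c).adjugate * (M.adjugate * (diagonal c).adjugate) := by
    rw [hfact, adjugate_mul_distrib, adjugate_mul_distrib]
  set Pc : ℝ := ∏ i : {x // x ∈ J}, c i with hPcdef
  have hPc : Pc = ∏ j ∈ J, v₀ ⬝ᵥ q j := Finset.prod_coe_sort J (fun j => v₀ ⬝ᵥ q j)
  have hPc0 : Pc ≠ 0 := by
    rw [hPc]
    exact Finset.prod_ne_zero_iff.mpr fun j _ => h j
  have hDc : (diagonal c).adjugate *ᵥ c = Pc • (1 : {x // x ∈ J} → ℝ) := by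
    rw [adjugate_diagonal]
    ext i
    rw [mulVec_diagonal]
    simp only [Pi.smul_apply, Pi.one_apply, smul_eq_mul, mul_one, hPcdef]
    exact Finset.prod_erase_mul Finset.univ c (Finset.mem_univ i)
  have hcD : c ᵥ* (diagonal c).adjugate = Pc • (1 : {x // x ∈ J} → ℝ) := by
    rw [adjugate_diagonal]
    ext i
    rw [vecMul_diagonal]
    simp only [Pi.smul_apply, Pi.one_apply, smul_eq_mul, mul_one, hPcdef]
    rw [mul_comm]
    exact Finset.prod_erase_mul Finset.univ c (Finset.mem_univ i)
  -- the right-hand side reduces to the total cofactor sum of M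
  have hvqc : (fun i : {x // x ∈ J} => vq i.1) = c := by
    funext i; rw [hvq, hc]
  have hRHS : vq ⬝ᵥ (extM J (restr J Q).adjugate *ᵥ vq) =
      Pc * Pc * ((1 : {x // x ∈ J} → ℝ) ⬝ᵥ (M.adjugate *ᵥ (1 : {x // x ∈ J} → ℝ))) := by
    rw [dot_extM, hvqc, hadj, ← mulVec_mulVec, dotProduct_mulVec, hcD,
      ← mulVec_mulVec, hDc, mulVec_smul, smul_dotProduct, dotProduct_smul,
      smul_eq_mul, smul_eq_mul]
    ring
  -- the left-hand side is the same cofactor sum, via `key_det`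
  let E : {i : {x // x ∈ J} // i ≠ j₀} ≃ {x // x ∈ J.erase j₁} :=
  { toFun := fun i => ⟨i.1.1, Finset.mem_erase.mpr
      ⟨fun hh => i.2 (Subtype.ext hh), i.1.2⟩⟩
    invFun := fun j => ⟨⟨j.1, Finset.mem_of_mem_erase j.2⟩,
      fun hh => (Finset.mem_erase.mp j.2).1 (congrArg Subtype.val hh)⟩
    left_inv := fun i => Subtype.ext (Subtype.ext rfl)
    right_inv := fun j => rfl }
  have hGsub : ∀ i j, (G.submatrix E E) i j =
      M j₀ j₀ - M i.1 j₀ - M j₀ j.1 + M i.1 j.1 := by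
    intro i j
    rw [submatrix_apply, hG]
    have hEi : ((E i : {x // x ∈ J.erase j₁}) : Fin k) = i.1.1 := rfl
    have hEj : ((E j : {x // x ∈ J.erase j₁}) : Fin k) = j.1.1 := rfl
    rw [hEi, hEj]
    simp only [hM, Matrix.of_apply, sub_dotProduct, dotProduct_sub]
    show _ = qt j₁ ⬝ᵥ qt j₁ - qt i.1.1 ⬝ᵥ qt j₁ - qt j₁ ⬝ᵥ qt j.1.1 + qt i.1.1 ⬝ᵥ qt j.1.1
    ring
  have hLHS : G.det = (1 : {x // x ∈ J} → ℝ) ⬝ᵥ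
      (M.adjugate *ᵥ (1 : {x // x ∈ J} → ℝ)) := by
    rw [← det_submatrix_equiv_self E G]
    exact key_det j₀ M (G.submatrix E E) hGsub
  rw [hLHS, hRHS, ← hPc]
  field_simp
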